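/- Let x be a symmetric tensor of order p on ℝ^d. Then ‖x‖_rv ≥ ‖x‖_2 / √(p!), where ‖x‖_rv is the Euclidean norm of the reduced vectorized form of x (the vector of coefficients of x in the basis of symmetrized standard basis tensors). -/

import Mathlib

open Finset

/-- The symmetrized basis tensor `s_i = (1/∏_m i_m!) ∑_{σ ∈ S_p} e_{j_{σ(1)}} ⊗ ⋯ ⊗ e_{j_{σ(p)}}`,
where `j : Fin p → Fin d` is a string containing each value `m` exactly `i m` times.
A tensor of order `p` on `ℝ^d` is represented as a function `(Fin p → Fin d) → ℝ`;
the entry of `s_i` at position `f` is `(1/∏_m i_m!) · #{σ | ∀ k, j (σ k) = f k}`. -/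
noncomputable def sBasis (d p : ℕ) (i : Fin d → ℕ) (j : Fin p → Fin d) :
    (Fin p → Fin d) → ℝ := fun f =>
  (∏ m, ((i m).factorial : ℝ))⁻¹ *
    ((Finset.univ.filter (fun σ : Equiv.Perm (Fin p) => ∀ k, j (σ k) = f k)).card : ℝ)

-- N_f ≤ ∏ (fiber sizes)!
lemma card_perm_le {d p : ℕ} (jj f : Fin p → Fin d) :
    ((Finset.univ.filter (fun σ : Equiv.Perm (Fin p) => ∀ k, jj (σ k) = f k)).card : ℕ) ≤
      ∏ m, ((Finset.univ.filter (fun k => jj k = m)).card).factorial := by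
  classical
  rw [← Fintype.card_subtype]
  have hinj : Function.Injective
      (fun (σ : {σ : Equiv.Perm (Fin p) // ∀ k, jj (σ.1 k) = f k})
        (m : Fin d) =>
        (⟨fun k : {k // f k = m} => ⟨σ.1 k.1, (σ.2 k.1).trans k.2⟩,
          fun a b hab => Subtype.ext (σ.1.injective (congrArg Subtype.val hab))⟩ :
          {k // f k = m} ↪ {k // jj k = m})) := by
    intro σ τ h
    apply Subtype.ext; apply Equiv.ext; intro k
    have := congrArg (fun g => (g (f k) ⟨k, rfl⟩ : {k' // jj k' = f k}).1) h
    exact this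
  calc Fintype.card {σ : Equiv.Perm (Fin p) // ∀ k, jj (σ.1 k) = f k}
      ≤ Fintype.card (∀ m : Fin d, ({k // f k = m} ↪ {k // jj k = m})) :=
        Fintype.card_le_of_injective _ hinj
    _ = ∏ m, Fintype.card ({k : Fin p // f k = m} ↪ {k : Fin p // jj k = m}) :=
        Fintype.card_pi
    _ ≤ ∏ m, ((Finset.univ.filter (fun k => jj k = m)).card).factorial := by
        refine Finset.prod_le_prod (fun _ _ => Nat.zero_le _) (fun m _ => ?_)
        rw [Fintype.card_embedding_eq, Fintype.card_subtype]
        rcases le_or_gt (Fintype.card {k : Fin p // f k = m})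
            ((Finset.univ.filter (fun k => jj k = m)).card) with h | h
        · exact Nat.le_of_dvd (Nat.factorial_pos _)
            ⟨_, (Nat.factorial_mul_descFactorial h).symm.trans (mul_comm _ _)⟩
        · rw [Nat.descFactorial_eq_zero_iff_lt.mpr h]; exact Nat.zero_le _

lemma sBasis_nonneg {d p : ℕ} (i : Fin d → ℕ) (jj : Fin p → Fin d) (f : Fin p → Fin d) :
    0 ≤ sBasis d p i jj f := by
  unfold sBasis
  positivity

lemma sBasis_le_one {d p : ℕ} (i : Fin d → ℕ) (jj : Fin p → Fin d)
    (hj : ∀ m, (Finset.univ.filter (fun k => jj k = m)).card = i m) (f : Fin p → Fin d) :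
    sBasis d p i jj f ≤ 1 := by
  unfold sBasis
  have hK : (0:ℝ) < ∏ m, ((i m).factorial : ℝ) := by positivity
  rw [inv_mul_le_iff₀ hK, mul_one]
  have := card_perm_le jj f
  simp only [hj] at this
  calc ((Finset.univ.filter (fun σ : Equiv.Perm (Fin p) => ∀ k, jj (σ k) = f k)).card : ℝ)
      ≤ ((∏ m, ((i m).factorial) : ℕ) : ℝ) := by exact_mod_cast this
    _ = ∏ m, ((i m).factorial : ℝ) := by push_cast; ring

-- sum over f of the permutation counts equals p!
lemma sum_counts {d p : ℕ} (jj : Fin p → Fin d) :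
    ∑ f : Fin p → Fin d,
      ((Finset.univ.filter (fun σ : Equiv.Perm (Fin p) => ∀ k, jj (σ k) = f k)).card) =
      p.factorial := by
  classical
  have h1 : ∀ f : Fin p → Fin d,
      (Finset.univ.filter (fun σ : Equiv.Perm (Fin p) => ∀ k, jj (σ k) = f k)).card =
      ∑ σ : Equiv.Perm (Fin p), if (∀ k, jj (σ k) = f k) then 1 else 0 := by
    intro f; rw [Finset.card_filter]
  simp_rw [h1]
  rw [Finset.sum_comm]
  have h2 : ∀ σ : Equiv.Perm (Fin p),
      ∑ f : Fin p → Fin d, (if (∀ k, jj (σ k) = f k) then 1 else 0) = 1 := by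
    intro σ
    rw [Finset.sum_eq_single (fun k => jj (σ k))]
    · simp
    · intro f _ hf
      rw [if_neg]
      intro h
      exact hf (funext fun k => (h k).symm)
    · simp
  simp_rw [h2]
  simp [Fintype.card_perm]

-- if a permutation matches jj with f, fiber cardinalities agree
lemma fiber_card_eq {d p : ℕ} (jj f : Fin p → Fin d) (σ : Equiv.Perm (Fin p))
    (h : ∀ k, jj (σ k) = f k) (m : Fin d) :
    (Finset.univ.filter (fun k => f k = m)).card =
      (Finset.univ.filter (fun k => jj k = m)).card := by
  classical
  refine Finset.card_bij (fun k _ => σ k) ?_ ?_ ?_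
  · intro k hk
    simp only [Finset.mem_filter, Finset.mem_univ, true_and] at hk ⊢
    rw [h k, hk]
  · intro a _ b _ hab; exact σ.injective hab
  · intro k' hk'
    simp only [Finset.mem_filter, Finset.mem_univ, true_and] at hk'
    refine ⟨σ.symm k', ?_, by simp⟩
    simp only [Finset.mem_filter, Finset.mem_univ, true_and]
    rw [← h (σ.symm k')]
    simpa using hk' 

lemma disj {d p : ℕ} (i i' : Fin d → ℕ) (jj jj' f : Fin p → Fin d)
    (hji : ∀ m, (Finset.univ.filter (fun k => jj k = m)).card = i m)
    (hji' : ∀ m, (Finset.univ.filter (fun k => jj' k = m)).card = i' m)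
    (hne : i ≠ i') :
    sBasis d p i jj f * sBasis d p i' jj' f = 0 := by
  classical
  unfold sBasis
  by_cases h1 : (Finset.univ.filter (fun σ : Equiv.Perm (Fin p) => ∀ k, jj (σ k) = f k)).card = 0
  · rw [h1]; push_cast; ring
  by_cases h2 : (Finset.univ.filter (fun σ : Equiv.Perm (Fin p) => ∀ k, jj' (σ k) = f k)).card = 0
  · rw [h2]; push_cast; ring
  exfalso
  obtain ⟨σ, hσ⟩ := Finset.card_pos.mp (Nat.pos_of_ne_zero h1)
  obtain ⟨τ, hτ⟩ := Finset.card_pos.mp (Nat.pos_of_ne_zero h2)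
  simp only [Finset.mem_filter, Finset.mem_univ, true_and] at hσ hτ
  apply hne
  funext m
  rw [← hji m, ← hji' m, ← fiber_card_eq jj f σ hσ m, ← fiber_card_eq jj' f τ hτ m]

lemma sum_sBasis_le {d p : ℕ} (i : Fin d → ℕ) (jj : Fin p → Fin d) :
    ∑ f : Fin p → Fin d, sBasis d p i jj f ≤ (p.factorial : ℝ) := by
  unfold sBasis
  rw [← Finset.mul_sum]
  have h1 : ∑ f : Fin p → Fin d,
      ((Finset.univ.filter (fun σ : Equiv.Perm (Fin p) => ∀ k, jj (σ k) = f k)).card : ℝ)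
      = (p.factorial : ℝ) := by
    rw [← Nat.cast_sum]
    exact_mod_cast congrArg (Nat.cast : ℕ → ℝ) (sum_counts jj)
  rw [h1]
  have hK : (1:ℝ) ≤ ∏ m, ((i m).factorial : ℝ) := by
    have : 1 ≤ ∏ m, (i m).factorial := Finset.one_le_prod' (fun m _ => (i m).factorial_pos)
    calc (1:ℝ) ≤ ((∏ m, (i m).factorial : ℕ) : ℝ) := by exact_mod_cast this
      _ = ∏ m, ((i m).factorial : ℝ) := by push_cast; ring
  calc (∏ m, ((i m).factorial : ℝ))⁻¹ * (p.factorial : ℝ)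
      ≤ 1 * (p.factorial : ℝ) := by
        apply mul_le_mul_of_nonneg_right _ (by positivity)
        exact inv_le_one_of_one_le₀ hK
    _ = (p.factorial : ℝ) := one_mul _

/-- For a symmetric tensor `x = ∑_i c_i s_i` expanded in the symmetrized basis,
`‖x‖_rv ≥ ‖x‖₂ / √(p!)`, where `‖x‖_rv = √(∑_i c_i²)` and `‖x‖₂` is the Euclidean
norm of `x` as an element of `ℝ^{d^p}`. -/
theorem stmt_1 (d p : ℕ) (I : Finset (Fin d → ℕ))
    (hI : ∀ i ∈ I, ∑ m, i m = p)
    (j : (Fin d → ℕ) → (Fin p → Fin d))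
    (hj : ∀ i ∈ I, ∀ m, (Finset.univ.filter (fun k => j i k = m)).card = i m)
    (c : (Fin d → ℕ) → ℝ) (x : (Fin p → Fin d) → ℝ)
    (hx : x = ∑ i ∈ I, c i • sBasis d p i (j i)) :
    Real.sqrt (∑ f : Fin p → Fin d, x f ^ 2) / Real.sqrt (p.factorial) ≤
      Real.sqrt (∑ i ∈ I, c i ^ 2) := by
  classical
  have hxf : ∀ f, x f = ∑ i ∈ I, c i * sBasis d p i (j i) f := by
    intro f; rw [hx]; simp [Finset.sum_apply]
  have key : ∀ f, x f ^ 2 = ∑ i ∈ I, (c i * sBasis d p i (j i) f) ^ 2 := by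
    intro f
    rw [hxf f, sq, Finset.sum_mul_sum]
    refine Finset.sum_congr rfl (fun i hi => ?_)
    rw [Finset.sum_eq_single i]
    · ring
    · intro i' hi' hne
      have hd := disj i i' (j i) (j i') f (hj i hi) (hj i' hi') (Ne.symm hne)
      linear_combination (c i * c i') * hd
    · intro h; exact absurd hi h
  have hS : ∑ f : Fin p → Fin d, x f ^ 2 ≤ (p.factorial : ℝ) * ∑ i ∈ I, c i ^ 2 := by
    simp_rw [key]
    rw [Finset.sum_comm, Finset.mul_sum]
    refine Finset.sum_le_sum (fun i hi => ?_)
    have hsum : ∑ f : Fin p → Fin d, (c i * sBasis d p i (j i) f) ^ 2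
        = c i ^ 2 * ∑ f : Fin p → Fin d, sBasis d p i (j i) f ^ 2 := by
      rw [Finset.mul_sum]; exact Finset.sum_congr rfl (fun f _ => by ring)
    rw [hsum]
    have h1 : ∑ f : Fin p → Fin d, sBasis d p i (j i) f ^ 2 ≤ (p.factorial : ℝ) := by
      calc ∑ f : Fin p → Fin d, sBasis d p i (j i) f ^ 2
          ≤ ∑ f : Fin p → Fin d, sBasis d p i (j i) f := by
            refine Finset.sum_le_sum (fun f _ => ?_)
            have h0 := sBasis_nonneg i (j i) f
            have h1 := sBasis_le_one i (j i) (hj i hi) f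
            nlinarith
        _ ≤ (p.factorial : ℝ) := sum_sBasis_le i (j i)
    calc c i ^ 2 * ∑ f : Fin p → Fin d, sBasis d p i (j i) f ^ 2
        ≤ c i ^ 2 * (p.factorial : ℝ) := by
          exact mul_le_mul_of_nonneg_left h1 (sq_nonneg _)
      _ = (p.factorial : ℝ) * c i ^ 2 := mul_comm _ _
  have hfac : (0:ℝ) < Real.sqrt (p.factorial) :=
    Real.sqrt_pos.mpr (by exact_mod_cast p.factorial_pos)
  rw [div_le_iff₀ hfac, ← Real.sqrt_mul (by positivity)]
  exact Real.sqrt_le_sqrt (by linarith [hS, mul_comm (p.factorial:ℝ) (∑ i ∈ I, c i ^ 2)])
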